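/- Suppose each client i ∈ C is assigned a logradius r_i^area and a facility j_i^open satisfying d(i, j_i^open) ≤ (c₂ + c₃ + c₄)·5^{r_i^area}, where c₂ = 35, c₃ = 107, c₄ = 284. Suppose further that each open triplet ⟨j,r,s⟩ satisfies the abundance condition 5^r·|C ∩ X(j,r)| ≥ f*_{⟨j,r⟩} and that each client belongs to X(j,r) for at most one open triplet, with r_i^area = r whenever i ∈ X(j,r) for an open ⟨j,r,s⟩. Then the total cost satisfies Σ_{i∈C} d(i, j_i^open) + Σ_{j ∈ I_C} f_j ≤ Σ_{i∈C} (c₂+c₃+c₄+1)·5^{r_i^area}, where I_C is the set of opened designated facilities and f*_{⟨j,r⟩} ≥ f_{j*_{⟨j,r⟩}} is the cost of the designated facility of ⟨j,r⟩. -/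

import Mathlib

private lemma sum_image_le_aux {α β M : Type*} [DecidableEq β]
    [AddCommMonoid M] [PartialOrder M] [IsOrderedAddMonoid M] (s : Finset α) (g : α → β) (f : β → M)
    (hf : ∀ b, 0 ≤ f b) :
    ∑ j ∈ s.image g, f j ≤ ∑ t ∈ s, f (g t) := by
  classical
  induction s using Finset.induction_on with
  | empty => simp
  | @insert a s ha ih =>
    rw [Finset.image_insert, Finset.sum_insert ha]
    by_cases hg : g a ∈ s.image g
    · rw [Finset.insert_eq_self.mpr hg]
      exact le_add_of_nonneg_left (hf _) |>.trans (add_le_add_right ih _)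
    · rw [Finset.sum_insert hg]
      exact add_le_add_right ih _

/-- total cost bound `Σ d(i,j_i^open) + Σ_{j ∈ I_C} f_j ≤
Σ_i (c₂+c₃+c₄+1)·5^{r_i^area}`. -/
theorem stmt_11 {V : Type*} [MetricSpace V] [DecidableEq V]
    (c₂ c₃ c₄ : ℝ) (hc₂ : c₂ = 35) (hc₃ : c₃ = 107) (hc₄ : c₄ = 284)
    (C : Finset V) (OpenT : Finset (V × ℤ × ℕ))
    (X : V → ℤ → Set V) (rarea : V → ℤ) (jopen : V → V)
    (fstar : V → ℤ → ℝ) (dstar : V → ℤ → V) (f : V → ℝ)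
    (hfnn : ∀ j, 0 ≤ f j)
    -- designated facility cost
    (hdes : ∀ (j : V) (r : ℤ), f (dstar j r) ≤ fstar j r)
    -- distance bound for each client
    (hdist : ∀ i ∈ C, dist i (jopen i) ≤ (c₂ + c₃ + c₄) * (5 : ℝ) ^ (rarea i))
    -- abundance condition for each open triplet
    (habund : ∀ t ∈ OpenT,
      fstar t.1 t.2.1 ≤ (5 : ℝ) ^ t.2.1 * ((↑C ∩ X t.1 t.2.1).ncard : ℝ))
    -- each client lies in X of at most one open triplet
    (hone : ∀ i ∈ C, ∀ t ∈ OpenT, ∀ t' ∈ OpenT,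
      i ∈ X t.1 t.2.1 → i ∈ X t'.1 t'.2.1 → t = t')
    -- r_i^area matches the logradius of the open triplet whose X contains i
    (hr : ∀ i ∈ C, ∀ t ∈ OpenT, i ∈ X t.1 t.2.1 → rarea i = t.2.1) :
    ∑ i ∈ C, dist i (jopen i) +
      ∑ j ∈ OpenT.image (fun t => dstar t.1 t.2.1), f j ≤
    ∑ i ∈ C, (c₂ + c₃ + c₄ + 1) * (5 : ℝ) ^ (rarea i) := by
  classical
  have hpow : ∀ i : V, (0:ℝ) ≤ (5 : ℝ) ^ (rarea i) := fun i =>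
    le_of_lt (zpow_pos (by norm_num) _)
  -- facility part
  have hfac : ∑ j ∈ OpenT.image (fun t => dstar t.1 t.2.1), f j ≤
      ∑ i ∈ C, (5 : ℝ) ^ (rarea i) := by
    have h1 : ∑ j ∈ OpenT.image (fun t => dstar t.1 t.2.1), f j ≤
        ∑ t ∈ OpenT, f (dstar t.1 t.2.1) :=
      sum_image_le_aux OpenT _ f hfnn
    have h2 : ∀ t ∈ OpenT, f (dstar t.1 t.2.1) ≤
        ∑ i ∈ C.filter (fun i => i ∈ X t.1 t.2.1), (5 : ℝ) ^ (rarea i) := by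
      intro t ht
      refine (hdes t.1 t.2.1).trans ((habund t ht).trans ?_)
      have hcard : ((↑C ∩ X t.1 t.2.1 : Set V).ncard : ℝ) =
          ((C.filter (fun i => i ∈ X t.1 t.2.1)).card : ℝ) := by
        congr 1
        rw [Set.ncard_eq_toFinset_card']
        congr 1
        ext i
        simp [Set.mem_toFinset, Finset.mem_filter, and_comm]
      rw [hcard, mul_comm, Finset.card_eq_sum_ones, Nat.cast_sum]
      rw [Finset.sum_mul]
      apply Finset.sum_le_sum
      intro i hi
      rw [Finset.mem_filter] at hi
      rw [hr i hi.1 t ht hi.2]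
      simp
    calc ∑ j ∈ OpenT.image (fun t => dstar t.1 t.2.1), f j
        ≤ ∑ t ∈ OpenT, f (dstar t.1 t.2.1) := h1
      _ ≤ ∑ t ∈ OpenT, ∑ i ∈ C.filter (fun i => i ∈ X t.1 t.2.1),
            (5 : ℝ) ^ (rarea i) := Finset.sum_le_sum h2
      _ = ∑ i ∈ OpenT.biUnion (fun t => C.filter (fun i => i ∈ X t.1 t.2.1)),
            (5 : ℝ) ^ (rarea i) := by
          rw [Finset.sum_biUnion]
          intro t ht t' ht' hne
          simp only [Finset.disjoint_left, Finset.mem_filter]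
          rintro i ⟨hiC, hiX⟩ ⟨_, hiX'⟩
          exact hne (hone i hiC t ht t' ht' hiX hiX')
      _ ≤ ∑ i ∈ C, (5 : ℝ) ^ (rarea i) := by
          apply Finset.sum_le_sum_of_subset_of_nonneg
          · intro i hi
            simp only [Finset.mem_biUnion, Finset.mem_filter] at hi
            obtain ⟨t, _, hiC, _⟩ := hi
            exact hiC
          · intro i _ _; exact hpow i
  have hd : ∑ i ∈ C, dist i (jopen i) ≤
      ∑ i ∈ C, (c₂ + c₃ + c₄) * (5 : ℝ) ^ (rarea i) := Finset.sum_le_sum hdist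
  calc ∑ i ∈ C, dist i (jopen i) + ∑ j ∈ OpenT.image (fun t => dstar t.1 t.2.1), f j
      ≤ ∑ i ∈ C, (c₂ + c₃ + c₄) * (5 : ℝ) ^ (rarea i) +
        ∑ i ∈ C, (5 : ℝ) ^ (rarea i) := add_le_add hd hfac
    _ = ∑ i ∈ C, (c₂ + c₃ + c₄ + 1) * (5 : ℝ) ^ (rarea i) := by
        rw [← Finset.sum_add_distrib]
        congr 1; ext i; ring
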